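/- Every k-alternating function f: {0,1}^n → {0,1} (k ≥ 1) has total influence Inf[f] ≤ k·√n. -/

import Mathlib

set_option linter.unusedSectionVars false
set_option maxHeartbeats 800000

/-- Number of alternations of `f` along the chain `X` of `ℓ+1` points:
the number of indices `j` with `f (X j) ≠ f (X (j+1))`. -/
def altCount {n : ℕ} (f : (Fin n → Bool) → Bool) {ℓ : ℕ}
    (X : Fin (ℓ + 1) → (Fin n → Bool)) : ℕ :=
  (Finset.univ.filter (fun j : Fin ℓ => f (X j.castSucc) ≠ f (X j.succ))).card

/-- `a_f(x)`: the maximum number of alternations of `f` over all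
(strictly increasing) chains in `{0,1}^n` starting at `x`. -/
noncomputable def altFrom {n : ℕ} (f : (Fin n → Bool) → Bool) (x : Fin n → Bool) : ℕ :=
  sSup {k | ∃ (ℓ : ℕ) (X : Fin (ℓ + 1) → (Fin n → Bool)),
    StrictMono X ∧ X 0 = x ∧ altCount f X = k}

/-- `a(f)`: the maximum number of alternations of `f` over all
(strictly increasing) chains in `{0,1}^n`. -/
noncomputable def alt {n : ℕ} (f : (Fin n → Bool) → Bool) : ℕ :=
  sSup {k | ∃ (ℓ : ℕ) (X : Fin (ℓ + 1) → (Fin n → Bool)),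
    StrictMono X ∧ altCount f X = k}

/-- `Inf_i[f] = Pr_x[f(x) ≠ f(x^{⊕ i})]`, the influence of coordinate `i` on `f`. -/
noncomputable def influence {n : ℕ} (i : Fin n) (f : (Fin n → Bool) → Bool) : ℝ :=
  ((Finset.univ.filter (fun x : Fin n → Bool =>
      f x ≠ f (Function.update x i (!(x i))))).card : ℝ) / 2 ^ n

/-- `Inf[f] = ∑ i, Inf_i[f]`, the total influence of `f`. -/
noncomputable def totalInfluence {n : ℕ} (f : (Fin n → Bool) → Bool) : ℝ :=
  ∑ i : Fin n, influence i f


lemma cb_even (a : ℕ) : (2*a+1) * (Nat.centralBinom a)^2 ≤ 16^a := by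
  induction a with
  | zero => simp [Nat.centralBinom]
  | succ a ih =>
    have key : (a+1) * Nat.centralBinom (a+1) = 2 * (2*a+1) * Nat.centralBinom a :=
      Nat.succ_mul_centralBinom_succ a
    have h1 : (a+1)^2 * ((2*(a+1)+1) * (Nat.centralBinom (a+1))^2)
        = (2*a+3) * (4*(2*a+1)) * ((2*a+1) * (Nat.centralBinom a)^2) := by
      calc (a+1)^2 * ((2*(a+1)+1) * (Nat.centralBinom (a+1))^2)
          = (2*(a+1)+1) * ((a+1) * Nat.centralBinom (a+1))^2 := by ring
        _ = (2*(a+1)+1) * (2 * (2*a+1) * Nat.centralBinom a)^2 := by rw [key]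
        _ = (2*a+3) * (4*(2*a+1)) * ((2*a+1) * (Nat.centralBinom a)^2) := by ring
    have h2 : (a+1)^2 * ((2*(a+1)+1) * (Nat.centralBinom (a+1))^2)
        ≤ (2*a+3) * (4*(2*a+1)) * 16^a := by
      rw [h1]; exact Nat.mul_le_mul_left _ ih
    have h3 : (2*a+3) * (4*(2*a+1)) * 16^a ≤ (a+1)^2 * 16^(a+1) := by
      have : (2*a+3) * (4*(2*a+1)) ≤ (a+1)^2 * 16 := by nlinarith
      calc (2*a+3) * (4*(2*a+1)) * 16^a ≤ (a+1)^2 * 16 * 16^a := Nat.mul_le_mul_right _ this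
        _ = (a+1)^2 * 16^(a+1) := by ring
    exact Nat.le_of_mul_le_mul_left (h2.trans h3) (by positivity)

lemma cb_bound (m j : ℕ) : (m+1) * (m.choose j)^2 ≤ 4^m := by
  have hmid : m.choose j ≤ m.choose (m/2) := Nat.choose_le_middle j m
  have step : (m+1) * (m.choose (m/2))^2 ≤ 4^m := by
    rcases Nat.even_or_odd m with ⟨a, ha⟩ | ⟨a, ha⟩
    · subst ha
      have : (a+a)/2 = a := by omega
      rw [this]
      have : (a+a).choose a = Nat.centralBinom a := by rw [Nat.centralBinom]; ring_nf
      rw [this]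
      calc (a+a+1) * (Nat.centralBinom a)^2 = (2*a+1) * (Nat.centralBinom a)^2 := by ring_nf
        _ ≤ 16^a := cb_even a
        _ = 4^(a+a) := by rw [show (16:ℕ) = 4^2 by norm_num, ← pow_mul]; ring_nf
    · subst ha
      have hd : (2*a+1)/2 = a := by omega
      rw [hd]
      have hsymm : (2*a+1).choose a = (2*a+1).choose (a+1) := by
        rw [← Nat.choose_symm (by omega : a+1 ≤ 2*a+1)]
        congr 1; omega
      have hkey : (2*a+1) * (2*a).choose a = (2*a+1).choose (a+1) * (a+1) :=
        Nat.add_one_mul_choose_eq (2*a) a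
      have hkey2 : (a+1) * (2*a+1).choose a = (2*a+1) * Nat.centralBinom a := by
        rw [hsymm, Nat.centralBinom, mul_comm (a+1) _, ← hkey]
      have he := cb_even a
      have h1 : (a+1)^2 * ((2*a+1+1) * ((2*a+1).choose a)^2)
          = 2*(a+1) * ((2*a+1) * Nat.centralBinom a)^2 := by
        calc (a+1)^2 * ((2*a+1+1) * ((2*a+1).choose a)^2)
            = 2*(a+1) * ((a+1) * (2*a+1).choose a)^2 := by ring
          _ = 2*(a+1) * ((2*a+1) * Nat.centralBinom a)^2 := by rw [hkey2]
      have h2 : (a+1)^2 * ((2*a+1+1) * ((2*a+1).choose a)^2)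
          ≤ 2*(a+1) * ((2*a+1) * 16^a) := by
        rw [h1]
        have : ((2*a+1) * Nat.centralBinom a)^2 ≤ (2*a+1) * 16^a := by
          calc ((2*a+1) * Nat.centralBinom a)^2 = (2*a+1) * ((2*a+1) * (Nat.centralBinom a)^2) := by ring
            _ ≤ (2*a+1) * 16^a := Nat.mul_le_mul_left _ he
        exact Nat.mul_le_mul_left _ this
      have h3 : 2*(a+1) * ((2*a+1) * 16^a) ≤ (a+1)^2 * 4^(2*a+1) := by
        have h4 : 4^(2*a+1) = 4 * 16^a := by
          rw [pow_succ']
          congr 1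
          rw [show (16:ℕ) = 4^2 by norm_num, ← pow_mul, mul_comm 2 a]
        rw [h4]
        nlinarith [pow_pos (by norm_num : 0 < (4:ℕ)) a]
      exact Nat.le_of_mul_le_mul_left (h2.trans h3) (by positivity)
  calc (m+1) * (m.choose j)^2 ≤ (m+1) * (m.choose (m/2))^2 :=
        Nat.mul_le_mul_left _ (Nat.pow_le_pow_left hmid 2)
    _ ≤ 4^m := step

set_option linter.unusedSectionVars false
open Finset

variable {ι : Type} [Fintype ι] [DecidableEq ι]

/-- weight of a point of the cube -/
def wtG (x : ι → Bool) : ℕ := (Finset.univ.filter (fun i => x i = true)).card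

def altCountG {ι : Type} (f : (ι → Bool) → Bool) {ℓ : ℕ}
    (X : Fin (ℓ + 1) → (ι → Bool)) : ℕ :=
  (Finset.univ.filter (fun j : Fin ℓ => f (X j.castSucc) ≠ f (X j.succ))).card

noncomputable def altGen {ι : Type} (f : (ι → Bool) → Bool) : ℕ :=
  sSup {k | ∃ (ℓ : ℕ) (X : Fin (ℓ + 1) → (ι → Bool)),
    StrictMono X ∧ altCountG f X = k}

lemma wt_lt_wt {x y : ι → Bool} (h : x < y) : wtG x < wtG y := by
  rw [Pi.lt_def] at h
  obtain ⟨hle, i, hi⟩ := h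
  apply Finset.card_lt_card
  constructor
  · intro a ha
    simp only [mem_filter, mem_univ, true_and] at ha ⊢
    have := hle a; rw [ha] at this
    exact Bool.le_iff_imp.mp this rfl
  · intro hsub
    obtain ⟨hxi, hyi⟩ := Bool.lt_iff.mp hi
    have : i ∈ Finset.univ.filter (fun i => x i = true) := hsub (by simp [hyi])
    simp [hxi] at this

lemma chain_len_le {ℓ : ℕ} {X : Fin (ℓ + 1) → (ι → Bool)} (hX : StrictMono X) :
    ℓ ≤ Fintype.card ι := by
  have h : ∀ j : Fin (ℓ+1), (j : ℕ) ≤ wtG (X j) := by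
    intro j
    induction j using Fin.induction with
    | zero => simp
    | succ j ih =>
      have := wt_lt_wt (hX (Fin.castSucc_lt_succ : j.castSucc < j.succ))
      have hj : (j.castSucc : ℕ) = (j : ℕ) := rfl
      rw [Fin.val_succ]
      omega
  have h2 : wtG (X (Fin.last ℓ)) ≤ Fintype.card ι := by
    apply le_trans (Finset.card_filter_le _ _)
    exact le_of_eq (Finset.card_univ)
  have := h (Fin.last ℓ)
  simp at this
  omega

lemma altCountG_le {ι : Type} {f : (ι → Bool) → Bool} {ℓ : ℕ}
    {X : Fin (ℓ + 1) → (ι → Bool)} : altCountG f X ≤ ℓ := by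
  apply le_trans (Finset.card_filter_le _ _); simp

lemma altSet_bddAbove (f : (ι → Bool) → Bool) :
    BddAbove {k | ∃ (ℓ : ℕ) (X : Fin (ℓ + 1) → (ι → Bool)),
      StrictMono X ∧ altCountG f X = k} := by
  refine ⟨Fintype.card ι, fun k hk => ?_⟩
  obtain ⟨ℓ, X, hX, hc⟩ := hk
  exact hc ▸ le_trans altCountG_le (chain_len_le hX)

lemma altSet_nonempty (f : (ι → Bool) → Bool) :
    {k | ∃ (ℓ : ℕ) (X : Fin (ℓ + 1) → (ι → Bool)),
      StrictMono X ∧ altCountG f X = k}.Nonempty := by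
  refine ⟨0, 0, fun _ => (fun _ => false), ?_, ?_⟩
  · intro a b hab
    have ha := a.isLt
    have hb := b.isLt
    rw [Fin.lt_def] at hab
    omega
  · simp [altCountG]

lemma altCountG_le_altGen {f : (ι → Bool) → Bool} {ℓ : ℕ}
    {X : Fin (ℓ + 1) → (ι → Bool)} (hX : StrictMono X) :
    altCountG f X ≤ altGen f :=
  le_csSup (altSet_bddAbove f) ⟨ℓ, X, hX, rfl⟩

lemma exists_chain_altGen (f : (ι → Bool) → Bool) :
    ∃ (ℓ : ℕ) (X : Fin (ℓ + 1) → (ι → Bool)),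
      StrictMono X ∧ altCountG f X = altGen f :=
  Nat.sSup_mem (altSet_nonempty f) (altSet_bddAbove f)

/-- altCount of a cons chain -/
lemma altCountG_cons {ι : Type} (f : (ι → Bool) → Bool) {ℓ : ℕ}
    (x : ι → Bool) (X : Fin (ℓ + 1) → (ι → Bool)) :
    altCountG f (Fin.cons x X) =
      (if f x ≠ f (X 0) then 1 else 0) + altCountG f X := by
  classical
  unfold altCountG
  rw [Finset.card_filter, Finset.card_filter, Fin.sum_univ_succ]
  have hsum : ∀ j : Fin ℓ,
      (if f ((Fin.cons x X : Fin (ℓ+2) → (ι → Bool)) j.succ.castSucc)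
          ≠ f ((Fin.cons x X : Fin (ℓ+2) → (ι → Bool)) j.succ.succ) then 1 else 0)
      = (if f (X j.castSucc) ≠ f (X j.succ) then (1:ℕ) else 0) := by
    intro j
    have h1 : (Fin.cons x X : Fin (ℓ+2) → (ι → Bool)) j.succ.castSucc = X j.castSucc := by
      rw [show j.succ.castSucc = j.castSucc.succ by rfl, Fin.cons_succ]
    have h2 : (Fin.cons x X : Fin (ℓ+2) → (ι → Bool)) j.succ.succ = X j.succ := by
      rw [Fin.cons_succ]
    rw [h1, h2]
  rw [Finset.sum_congr rfl (fun j _ => hsum j)]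
  have e1 : (Fin.cons x X : Fin (ℓ+2) → (ι → Bool)) (Fin.castSucc 0) = x := by
    rw [show (Fin.castSucc 0 : Fin (ℓ+2)) = 0 by rfl, Fin.cons_zero]
  have e2 : (Fin.cons x X : Fin (ℓ+2) → (ι → Bool)) (Fin.succ 0) = X 0 := by rw [Fin.cons_succ]
  rw [e1, e2]

variable {ι : Type} [Fintype ι] [DecidableEq ι]

def extC (m : ι) (y : {i : ι // i ≠ m} → Bool) : ι → Bool :=
  fun i => if h : i = m then true else y ⟨i, h⟩

def resC (m : ι) (x : ι → Bool) : {i : ι // i ≠ m} → Bool := fun i => x i.1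

noncomputable def restrF (f : (ι → Bool) → Bool) (m : ι) :
    ({i : ι // i ≠ m} → Bool) → Bool := fun y => f (extC m y)

lemma resC_extC (m : ι) (y : {i : ι // i ≠ m} → Bool) : resC m (extC m y) = y := by
  funext i
  simp [resC, extC, i.2]

lemma extC_resC {m : ι} {x : ι → Bool} (hx : x m = true) : extC m (resC m x) = x := by
  funext i
  by_cases h : i = m
  · simp [extC, h, hx]
  · simp [extC, resC, h]

lemma extC_mono {m : ι} : Monotone (extC m) := by
  intro y y' h i
  by_cases hi : i = m
  · simp [extC, hi]
  · simp only [extC, dif_neg hi]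
    exact h _

lemma extC_strictMono {m : ι} : StrictMono (extC m) := by
  intro y y' h
  rw [lt_iff_le_and_ne]
  refine ⟨extC_mono h.le, fun hc => ?_⟩
  have : y = y' := by
    have := congrArg (resC m) hc
    rwa [resC_extC, resC_extC] at this
  exact h.ne this

lemma extC_update (m : ι) (y : {i : ι // i ≠ m} → Bool) (i' : {i : ι // i ≠ m}) (b : Bool) :
    extC m (Function.update y i' b) = Function.update (extC m y) i'.1 b := by
  funext i
  by_cases h : i = m
  · subst h
    rw [Function.update_of_ne (Ne.symm i'.2)]
    simp [extC]
  · simp only [extC, dif_neg h, Function.update_apply]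
    by_cases hii : i = i'.1
    · have : (⟨i, h⟩ : {i : ι // i ≠ m}) = i' := Subtype.ext hii
      rw [if_pos this, if_pos hii]
    · have : (⟨i, h⟩ : {i : ι // i ≠ m}) ≠ i' := fun hc => hii (congrArg Subtype.val hc)
      rw [if_neg this, if_neg hii]

lemma wt_extC (m : ι) (y : {i : ι // i ≠ m} → Bool) : wtG (extC m y) = wtG y + 1 := by
  classical
  unfold wtG
  rw [Finset.card_filter, Finset.card_filter]
  rw [← Finset.sum_erase_add _ _ (Finset.mem_univ m)]
  congr 1
  · rw [Finset.sum_subtype (p := fun i => i ≠ m) (Finset.univ.erase m) (by simp)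
      (fun i => if extC m y i = true then (1:ℕ) else 0)]
    apply Finset.sum_congr rfl
    intro i _
    simp [extC, i.2]
  · simp [extC]

lemma strictMono_cons {α : Type*} [Preorder α] {ℓ : ℕ} {X : Fin (ℓ+1) → α}
    (hX : StrictMono X) {x : α} (hx : x < X 0) : StrictMono (Fin.cons x X) := by
  rw [Fin.strictMono_iff_lt_succ]
  intro i
  induction i using Fin.cases with
  | zero =>
    have e1 : (Fin.cons x X : Fin (ℓ+2) → α) (Fin.castSucc 0) = x := by
      rw [show (Fin.castSucc 0 : Fin (ℓ+2)) = 0 by rfl, Fin.cons_zero]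
    have e2 : (Fin.cons x X : Fin (ℓ+2) → α) (Fin.succ 0) = X 0 := by rw [Fin.cons_succ]
    rw [e1, e2]; exact hx
  | succ j =>
    have h1 : (Fin.cons x X : Fin (ℓ+2) → α) j.succ.castSucc = X j.castSucc := by
      rw [show j.succ.castSucc = j.castSucc.succ by rfl, Fin.cons_succ]
    have h2 : (Fin.cons x X : Fin (ℓ+2) → α) j.succ.succ = X j.succ := by rw [Fin.cons_succ]
    rw [h1, h2]
    exact hX (Fin.castSucc_lt_succ : j.castSucc < j.succ)

/-- all-false point -/
def zeroC (ι : Type) : ι → Bool := fun _ => false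

lemma zeroC_le (x : ι → Bool) : zeroC ι ≤ x := fun i => Bool.false_le _

lemma zeroC_lt {x : ι → Bool} (hx : x ≠ zeroC ι) : zeroC ι < x :=
  lt_of_le_of_ne (zeroC_le x) (Ne.symm hx)

lemma alt_restr_le (f : (ι → Bool) → Bool) (m : ι) :
    altGen (restrF f m) + (if f (zeroC ι) ≠ f (extC m (zeroC _)) then 1 else 0)
      ≤ altGen f := by
  obtain ⟨ℓ, Y, hY, hYc⟩ := exists_chain_altGen (restrF f m)
  set Yh : Fin (ℓ+1) → (ι → Bool) := fun j => extC m (Y j) with hYh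
  have hYhm : StrictMono Yh := extC_strictMono.comp hY
  have hYhc : altCountG f Yh = altGen (restrF f m) := hYc
  by_cases hb : f (zeroC ι) ≠ f (extC m (zeroC _))
  · rw [if_pos hb]
    by_cases h0 : Y 0 = zeroC _
    · -- prepend zeroC ι
      have hlt : zeroC ι < Yh 0 := by
        apply zeroC_lt
        intro hc
        have h' := congrFun hc m
        rw [hYh] at h'
        simp [extC, zeroC] at h'
      have hmono := strictMono_cons hYhm hlt
      have := altCountG_le_altGen (f := f) hmono
      rw [altCountG_cons] at this
      have hne : f (zeroC ι) ≠ f (Yh 0) := by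
        rw [hYh]; simpa [h0] using hb
      rw [if_pos hne, hYhc] at this
      omega
    · -- prepend zeroC and extC m zeroC
      have hlt2 : extC m (zeroC _) < Yh 0 := extC_strictMono (zeroC_lt h0)
      have hmono2 := strictMono_cons hYhm hlt2
      have hlt1 : zeroC ι < (Fin.cons (extC m (zeroC _)) Yh : Fin (ℓ+2) → (ι → Bool)) 0 := by
        rw [Fin.cons_zero]
        apply zeroC_lt
        intro hc
        have h' := congrFun hc m
        simp [extC, zeroC] at h'
      have hmono1 := strictMono_cons hmono2 hlt1
      have := altCountG_le_altGen (f := f) hmono1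
      rw [altCountG_cons, Fin.cons_zero, altCountG_cons, hYhc, if_pos hb] at this
      omega
  · rw [if_neg hb]
    have := altCountG_le_altGen (f := f) hYhm
    rw [hYhc] at this
    omega

section TEsec
variable {ι : Type} [Fintype ι] [DecidableEq ι]

def halfP (f : (ι → Bool) → Bool) : Finset ((ι → Bool) × ι) :=
  Finset.univ.filter (fun p => p.1 p.2 = false ∧ f p.1 ≠ f (Function.update p.1 p.2 true))

def TE (f : (ι → Bool) → Bool) : ℕ :=
  ∑ p ∈ halfP f, (wtG p.1).factorial * (Fintype.card ι - 1 - wtG p.1).factorial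

lemma wtG_zeroC : wtG (zeroC ι) = 0 := by simp [wtG, zeroC]

lemma wtG_pos {x : ι → Bool} (hx : x ≠ zeroC ι) : 0 < wtG x := by
  have hex : ∃ i, x i = true := by
    by_contra h
    push_neg at h
    apply hx
    funext i
    have := h i
    simp only [Bool.not_eq_true] at this
    simpa [zeroC] using this
  obtain ⟨i, hi⟩ := hex
  show 0 < (Finset.univ.filter (fun i => x i = true)).card
  exact Finset.card_pos.mpr ⟨i, by simp [hi]⟩

lemma extC_zeroC (m : ι) :
    extC m (zeroC {i : ι // i ≠ m}) = Function.update (zeroC ι) m true := by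
  funext i
  by_cases h : i = m
  · subst h
    simp [extC]
  · simp [extC, h, zeroC, Function.update_apply]

lemma TE_le_aux : ∀ (N : ℕ) (ι : Type) (_ : Fintype ι) (_ : DecidableEq ι)
    (f : (ι → Bool) → Bool), Fintype.card ι = N → TE f ≤ altGen f * N.factorial := by
  intro N
  induction N with
  | zero =>
    intro ι _ _ f hcard
    have : IsEmpty ι := Fintype.card_eq_zero_iff.mp hcard
    have : halfP f = ∅ := by
      apply Finset.eq_empty_of_forall_notMem
      intro p _
      exact this.elim p.2
    simp [TE, this]
  | succ N ih =>
    intro ι _ _ f hcard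
    classical
    have hcard1 : Fintype.card ι - 1 = N := by omega
    -- split off the zero point
    have hsplit := Finset.sum_filter_add_sum_filter_not (halfP f) (fun p => p.1 = zeroC ι)
      (fun p => (wtG p.1).factorial * (Fintype.card ι - 1 - wtG p.1).factorial)
    -- Sum over zero part
    set b : ι → ℕ := fun m => if f (zeroC ι) ≠ f (Function.update (zeroC ι) m true) then 1 else 0
      with hb
    have hA : ∑ p ∈ (halfP f).filter (fun p => p.1 = zeroC ι),
        (wtG p.1).factorial * (Fintype.card ι - 1 - wtG p.1).factorial
        = (∑ m : ι, b m) * N.factorial := by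
      have hconst : ∀ p ∈ (halfP f).filter (fun p => p.1 = zeroC ι),
          (wtG p.1).factorial * (Fintype.card ι - 1 - wtG p.1).factorial = N.factorial := by
        intro p hp
        rw [(Finset.mem_filter.mp hp).2, wtG_zeroC, hcard1]
        simp
      rw [Finset.sum_congr rfl hconst, Finset.sum_const, smul_eq_mul]
      have hsum : ∑ m : ι, b m = (Finset.univ.filter
          (fun m : ι => f (zeroC ι) ≠ f (Function.update (zeroC ι) m true))).card := by
        rw [Finset.card_filter, hb]
      have hcardeq : ((halfP f).filter (fun p => p.1 = zeroC ι)).card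
          = (Finset.univ.filter
            (fun m : ι => f (zeroC ι) ≠ f (Function.update (zeroC ι) m true))).card := by
        apply Finset.card_bij' (fun p _ => p.2) (fun m _ => ((zeroC ι, m) : (ι → Bool) × ι))
        · intro p hp
          obtain ⟨hp1, hp2⟩ := Finset.mem_filter.mp hp
          obtain ⟨_, h34⟩ := Finset.mem_filter.mp hp1
          rw [Finset.mem_filter]
          exact ⟨Finset.mem_univ _, hp2 ▸ h34.2⟩
        · intro m hm
          rw [Finset.mem_filter]
          exact ⟨Finset.mem_filter.mpr ⟨Finset.mem_univ _, rfl,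
            (Finset.mem_filter.mp hm).2⟩, rfl⟩
        · intro p hp
          have h2 := (Finset.mem_filter.mp hp).2
          conv_rhs => rw [← Prod.mk.eta (p := p)]
          rw [h2]
        · intro m _
          rfl
      rw [hcardeq, hsum]
    -- Sum over nonzero part equals sum over m of TE of restriction
    have hB : ∑ p ∈ (halfP f).filter (fun p => ¬ p.1 = zeroC ι),
        (wtG p.1).factorial * (Fintype.card ι - 1 - wtG p.1).factorial
        = ∑ m : ι, TE (restrF f m) := by
      have step1 : ∀ p ∈ (halfP f).filter (fun p => ¬ p.1 = zeroC ι),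
          (wtG p.1).factorial * (Fintype.card ι - 1 - wtG p.1).factorial
          = ∑ m : ι, (if p.1 m = true then (wtG p.1 - 1).factorial * (N - wtG p.1).factorial else 0) := by
        intro p hp
        simp only [Finset.mem_filter] at hp
        have hw : 0 < wtG p.1 := wtG_pos hp.2
        rw [← Finset.sum_filter]
        rw [Finset.sum_const, smul_eq_mul]
        have : (Finset.univ.filter (fun m => p.1 m = true)).card = wtG p.1 := rfl
        rw [this, hcard1]
        have : (wtG p.1).factorial = wtG p.1 * (wtG p.1 - 1).factorial := by
          conv_lhs => rw [show wtG p.1 = (wtG p.1 - 1) + 1 by omega]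
          rw [Nat.factorial_succ]
          congr 1
          omega
        rw [this, mul_assoc]
      rw [Finset.sum_congr rfl step1, Finset.sum_comm]
      apply Finset.sum_congr rfl
      intro m _
      -- collapse the if into a filter over halfP with p.1 m = true
      rw [← Finset.sum_filter]
      rw [Finset.filter_filter]
      have hfil : (halfP f).filter (fun p => ¬ p.1 = zeroC ι ∧ p.1 m = true)
          = (halfP f).filter (fun p => p.1 m = true) := by
        apply Finset.filter_congr
        intro p _
        constructor
        · exact fun h => h.2
        · intro h
          refine ⟨fun hc => ?_, h⟩
          rw [hc] at h
          simp [zeroC] at h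
      rw [hfil]
      -- bijection with halfP of the restriction
      unfold TE
      have hcardm : Fintype.card {i : ι // i ≠ m} = N := by
        rw [Fintype.card_subtype_compl, Fintype.card_subtype_eq]
        omega
      rw [hcardm]
      refine Finset.sum_bij'
        (fun p hp => (resC m p.1, (⟨p.2, by
          simp only [Finset.mem_filter, halfP, Finset.mem_univ, true_and] at hp
          intro hc
          rw [hc] at hp
          rw [hp.1.1] at hp
          exact Bool.false_ne_true hp.2⟩ : {i : ι // i ≠ m})))
        (fun q _ => (extC m q.1, q.2.1)) ?_ ?_ ?_ ?_ ?_
      · -- hi : membership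
        intro p hp
        simp only [Finset.mem_filter, halfP, Finset.mem_univ, true_and] at hp ⊢
        obtain ⟨⟨hfalse, hsens⟩, htrue⟩ := hp
        refine ⟨?_, ?_⟩
        · exact hfalse
        · unfold restrF
          rw [extC_resC htrue, extC_update, extC_resC htrue]
          exact hsens
      · -- hj
        intro q hq
        simp only [Finset.mem_filter, halfP, Finset.mem_univ, true_and] at hq ⊢
        obtain ⟨hfalse, hsens⟩ := hq
        refine ⟨⟨?_, ?_⟩, ?_⟩
        · show extC m q.1 q.2.1 = false
          rw [show extC m q.1 q.2.1 = q.1 q.2 by simp [extC, q.2.2]]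
          exact hfalse
        · unfold restrF at hsens
          rw [extC_update] at hsens
          exact hsens
        · simp [extC]
      · -- left inverse
        intro p hp
        simp only [Finset.mem_filter, halfP, Finset.mem_univ, true_and] at hp
        have := extC_resC hp.2
        ext <;> simp [this]
      · -- right inverse
        intro q hq
        have h1 : resC m (extC m q.1) = q.1 := resC_extC m q.1
        ext <;> simp [h1]
      · -- values
        intro p hp
        simp only [Finset.mem_filter, halfP, Finset.mem_univ, true_and] at hp
        have hwt : wtG p.1 = wtG (resC m p.1) + 1 := by
          conv_lhs => rw [← extC_resC hp.2]
          rw [wt_extC]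
        rw [hwt]
        simp only [Nat.add_sub_cancel]
        congr 2
        omega
    unfold TE
    rw [← hsplit, hA, hB]
    have hstep : ∀ m : ι, b m + altGen (restrF f m) ≤ altGen f := by
      intro m
      have := alt_restr_le f m
      rw [extC_zeroC] at this
      have hbm : b m = if f (zeroC ι) ≠ f (Function.update (zeroC ι) m true) then 1 else 0 := rfl
      omega
    calc (∑ m : ι, b m) * N.factorial + ∑ m : ι, TE (restrF f m)
        ≤ (∑ m : ι, b m) * N.factorial + ∑ m : ι, altGen (restrF f m) * N.factorial := by
          apply Nat.add_le_add_left
          apply Finset.sum_le_sum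
          intro m _
          exact ih {i : ι // i ≠ m} _ _ (restrF f m)
            (by rw [Fintype.card_subtype_compl, Fintype.card_subtype_eq]; omega)
      _ = ∑ m : ι, (b m + altGen (restrF f m)) * N.factorial := by
          rw [Finset.sum_mul, ← Finset.sum_add_distrib]
          apply Finset.sum_congr rfl
          intro m _
          ring
      _ ≤ ∑ m : ι, altGen f * N.factorial := by
          apply Finset.sum_le_sum
          intro m _
          exact Nat.mul_le_mul_right _ (hstep m)
      _ = altGen f * (N+1).factorial := by
          rw [Finset.sum_const, Finset.card_univ, hcard, smul_eq_mul, Nat.factorial_succ]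
          ring

lemma TE_le (f : (ι → Bool) → Bool) : TE f ≤ altGen f * (Fintype.card ι).factorial :=
  TE_le_aux (Fintype.card ι) ι _ _ f rfl

end TEsec


section Final

lemma alt_eq_altGen {n : ℕ} (f : (Fin n → Bool) → Bool) : alt f = altGen f := rfl

lemma sqrt_mul_choose_le {n : ℕ} (hn : 1 ≤ n) (j : ℕ) :
    Real.sqrt n * ((n-1).choose j : ℝ) ≤ 2 ^ (n-1) := by
  have hnat : n * ((n-1).choose j)^2 ≤ 4^(n-1) := by
    have := cb_bound (n-1) j
    rwa [show n - 1 + 1 = n by omega] at this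
  have hsq : (Real.sqrt n * ((n-1).choose j : ℝ))^2 ≤ ((2:ℝ) ^ (n-1))^2 := by
    have h1 : (Real.sqrt n * ((n-1).choose j : ℝ))^2 = (n : ℝ) * ((n-1).choose j : ℝ)^2 := by
      rw [mul_pow, Real.sq_sqrt (by positivity)]
    have h2 : ((2:ℝ) ^ (n-1))^2 = (4:ℝ)^(n-1) := by
      rw [← pow_mul, mul_comm, pow_mul]
      norm_num
    rw [h1, h2]
    calc (n : ℝ) * ((n-1).choose j : ℝ)^2 = ((n * ((n-1).choose j)^2 : ℕ) : ℝ) := by push_cast; ring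
      _ ≤ ((4^(n-1) : ℕ) : ℝ) := by exact_mod_cast hnat
      _ = (4:ℝ)^(n-1) := by push_cast; ring
  have h0 : (0:ℝ) ≤ Real.sqrt n * ((n-1).choose j : ℝ) := by positivity
  have h0' : (0:ℝ) ≤ (2:ℝ) ^ (n-1) := by positivity
  exact (pow_le_pow_iff_left₀ h0 h0' (by norm_num)).mp hsq

lemma edge_term_bound {n : ℕ} (hn : 1 ≤ n) {j : ℕ} (hj : j ≤ n - 1) :
    (2:ℝ)/2^n ≤ Real.sqrt n * ((j.factorial * (n-1-j).factorial : ℕ) : ℝ) / (n.factorial : ℝ) := by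
  have hfact : (n-1).choose j * j.factorial * (n-1-j).factorial = (n-1).factorial :=
    Nat.choose_mul_factorial_mul_factorial hj
  have hnfact : (n : ℕ) * ((n-1).choose j * (j.factorial * (n-1-j).factorial)) = n.factorial := by
    rw [show (n-1).choose j * (j.factorial * (n-1-j).factorial)
        = (n-1).choose j * j.factorial * (n-1-j).factorial by ring, hfact]
    rw [← Nat.succ_pred_eq_of_pos (by omega : 0 < n)]
    rw [Nat.factorial_succ]
    congr 1 <;> omega
  rw [div_le_div_iff₀ (by positivity) (by positivity)]
  -- goal : 2 * n! ≤ √n * (j! * (n-1-j)!) * 2^n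
  have key : Real.sqrt n * ((n-1).choose j : ℝ) ≤ 2 ^ (n-1) := sqrt_mul_choose_le hn j
  have hnr : (n : ℝ) = Real.sqrt n * Real.sqrt n := (Real.mul_self_sqrt (by positivity)).symm
  have hF : (0:ℝ) < ((j.factorial * (n-1-j).factorial : ℕ) : ℝ) := by positivity
  calc (2:ℝ) * (n.factorial : ℝ)
      = 2 * ((n : ℝ) * ((n-1).choose j : ℝ) * ((j.factorial * (n-1-j).factorial : ℕ) : ℝ)) := by
        rw [← hnfact]; push_cast; ring
    _ = (2 * Real.sqrt n) * (Real.sqrt n * ((n-1).choose j : ℝ))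
        * ((j.factorial * (n-1-j).factorial : ℕ) : ℝ) := by
        conv_lhs => rw [hnr]
        ring
    _ ≤ (2 * Real.sqrt n) * (2 ^ (n-1)) * ((j.factorial * (n-1-j).factorial : ℕ) : ℝ) := by
        apply mul_le_mul_of_nonneg_right _ hF.le
        apply mul_le_mul_of_nonneg_left key (by positivity)
    _ = Real.sqrt n * ((j.factorial * (n-1-j).factorial : ℕ) : ℝ) * (2 * 2 ^ (n-1)) := by ring
    _ = Real.sqrt n * ((j.factorial * (n-1-j).factorial : ℕ) : ℝ) * 2 ^ n := by
        rw [← pow_succ']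
        congr 2
        omega

lemma totalInfluence_eq {n : ℕ} (f : (Fin n → Bool) → Bool) :
    totalInfluence f = (2 * (halfP f).card : ℝ) / 2 ^ n := by
  classical
  unfold totalInfluence influence
  rw [← Finset.sum_div]
  congr 1
  -- sum of cards = 2 * card halfP
  set P : Finset ((Fin n → Bool) × Fin n) := Finset.univ.filter
    (fun p => f p.1 ≠ f (Function.update p.1 p.2 (!(p.1 p.2)))) with hP
  have h1 : ∑ i : Fin n, ((Finset.univ.filter (fun x : Fin n → Bool =>
      f x ≠ f (Function.update x i (!(x i))))).card : ℝ) = (P.card : ℝ) := by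
    rw [hP, Finset.card_filter]
    push_cast
    rw [Fintype.sum_prod_type_right]
    apply Finset.sum_congr rfl
    intro i _
    rw [Finset.card_filter]
    push_cast
    rfl
  rw [h1]
  have h2 : P.card = 2 * (halfP f).card := by
    rw [← Finset.card_filter_add_card_filter_not (s := P) (p := fun p => p.1 p.2 = false)]
    have hfalse : P.filter (fun p => p.1 p.2 = false) = halfP f := by
      ext p
      simp only [hP, halfP, Finset.mem_filter, Finset.mem_univ, true_and]
      constructor
      · rintro ⟨hs, hf⟩
        refine ⟨hf, ?_⟩
        rwa [hf, Bool.not_false] at hs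
      · rintro ⟨hf, hs⟩
        refine ⟨?_, hf⟩
        rwa [hf, Bool.not_false]
    have htrue : (P.filter (fun p => ¬ p.1 p.2 = false)).card = (halfP f).card := by
      apply Finset.card_bij' (fun p _ => (Function.update p.1 p.2 false, p.2))
        (fun q _ => (Function.update q.1 q.2 true, q.2))
      · intro p hp
        simp only [hP, Finset.mem_filter, Finset.mem_univ, true_and, Bool.not_eq_false] at hp
        rw [Function.update_idem]
        have : Function.update p.1 p.2 true = p.1 := by
          rw [← hp.2]; exact Function.update_eq_self _ _
        rw [this]
      · intro q hq
        simp only [halfP, Finset.mem_filter, Finset.mem_univ, true_and] at hq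
        rw [Function.update_idem]
        have : Function.update q.1 q.2 false = q.1 := by
          rw [← hq.1]; exact Function.update_eq_self _ _
        rw [this]
      · intro p hp
        simp only [hP, Finset.mem_filter, Finset.mem_univ, true_and, Bool.not_eq_false] at hp
        obtain ⟨hs, ht⟩ := hp
        rw [ht, Bool.not_true] at hs
        simp only [halfP, Finset.mem_filter, Finset.mem_univ, true_and]
        constructor
        · simp [Function.update_self]
        · rw [Function.update_idem]
          have : Function.update p.1 p.2 true = p.1 := by
            rw [← ht]; exact Function.update_eq_self _ _
          rw [this]
          exact hs.symm
      · intro q hq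
        simp only [halfP, Finset.mem_filter, Finset.mem_univ, true_and] at hq
        obtain ⟨hfalse', hs⟩ := hq
        simp only [hP, Finset.mem_filter, Finset.mem_univ, true_and, Bool.not_eq_false]
        constructor
        · rw [Function.update_self, Bool.not_true, Function.update_idem]
          have : Function.update q.1 q.2 false = q.1 := by
            rw [← hfalse']; exact Function.update_eq_self _ _
          rw [this]
          exact hs.symm
        · simp [Function.update_self]
    rw [hfalse, htrue]
    push_cast
    ring
  rw [h2]
  push_cast
  ring


/-- Every `k`-alternating `f : {0,1}^n → {0,1}` (with `k ≥ 1`) has total influence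
`Inf[f] ≤ k √n`. -/
theorem stmt11 {n : ℕ} (k : ℕ) (hk : 1 ≤ k) (f : (Fin n → Bool) → Bool)
    (hf : alt f ≤ k) :
    totalInfluence f ≤ (k : ℝ) * Real.sqrt n := by
  rcases Nat.eq_zero_or_pos n with hn | hn
  · subst hn
    have : totalInfluence f = 0 := by
      unfold totalInfluence
      exact Finset.sum_of_isEmpty _
    rw [this]
    positivity
  · classical
    rw [totalInfluence_eq]
    have hwt : ∀ p ∈ halfP f, wtG p.1 ≤ n - 1 := by
      intro p hp
      simp only [halfP, Finset.mem_filter, Finset.mem_univ, true_and] at hp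
      have hsub : Finset.univ.filter (fun i => p.1 i = true) ⊆ Finset.univ.erase p.2 := by
        intro i hi
        simp only [Finset.mem_filter, Finset.mem_univ, true_and] at hi
        rw [Finset.mem_erase]
        refine ⟨fun hc => ?_, Finset.mem_univ _⟩
        rw [hc, hp.1] at hi
        exact Bool.false_ne_true hi
      have := Finset.card_le_card hsub
      rw [Finset.card_erase_of_mem (Finset.mem_univ _), Finset.card_univ, Fintype.card_fin] at this
      exact this
    have hTE : TE f ≤ altGen f * n.factorial := by
      have := TE_le f
      rwa [Fintype.card_fin] at this
    have hcard : Fintype.card (Fin n) = n := Fintype.card_fin n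
    -- per-element bound summed
    have hmain : (2 * (halfP f).card : ℝ) / 2 ^ n
        ≤ Real.sqrt n / (n.factorial : ℝ) * (TE f : ℝ) := by
      have hrewrite : (2 * (halfP f).card : ℝ) / 2 ^ n = ∑ p ∈ halfP f, (2:ℝ)/2^n := by
        rw [Finset.sum_const, nsmul_eq_mul]
        ring
      rw [hrewrite]
      have hTEsum : (TE f : ℝ) = ∑ p ∈ halfP f,
          (((wtG p.1).factorial * (n - 1 - wtG p.1).factorial : ℕ) : ℝ) := by
        unfold TE
        rw [hcard]
        push_cast
        ring
      rw [hTEsum, Finset.mul_sum]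
      apply Finset.sum_le_sum
      intro p hp
      have := edge_term_bound hn (hwt p hp)
      calc (2:ℝ)/2^n ≤ Real.sqrt n * (((wtG p.1).factorial * (n-1-wtG p.1).factorial : ℕ) : ℝ)
            / (n.factorial : ℝ) := this
        _ = Real.sqrt n / (n.factorial : ℝ)
            * (((wtG p.1).factorial * (n-1-wtG p.1).factorial : ℕ) : ℝ) := by ring
    apply le_trans hmain
    have halt : altGen f ≤ k := by rw [← alt_eq_altGen]; exact hf
    have hTEk : (TE f : ℝ) ≤ (k : ℝ) * (n.factorial : ℝ) := by
      calc (TE f : ℝ) ≤ ((altGen f * n.factorial : ℕ) : ℝ) := by exact_mod_cast hTE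
        _ ≤ ((k * n.factorial : ℕ) : ℝ) := by
            exact_mod_cast Nat.mul_le_mul_right _ halt
        _ = (k : ℝ) * (n.factorial : ℝ) := by push_cast; ring
    calc Real.sqrt n / (n.factorial : ℝ) * (TE f : ℝ)
        ≤ Real.sqrt n / (n.factorial : ℝ) * ((k : ℝ) * (n.factorial : ℝ)) := by
          apply mul_le_mul_of_nonneg_left hTEk (by positivity)
      _ = (k : ℝ) * Real.sqrt n := by
          field_simp
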